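/- Let F₀ and F₁ be two matchings in a graph with |F₁| ≥ |F₀| + 2. Then the symmetric difference F₀ △ F₁ contains a path component with more F₁-edges than F₀-edges, and swapping the F₁-edges with the F₀-edges along this path yields matchings F₀', F₁' with |F₀'| = |F₀| + 1 and |F₁'| = |F₁| − 1. -/

import Mathlib

set_option linter.unusedSectionVars false
set_option maxHeartbeats 1000000


/-- A matching, given as a finite set of (non-loop) edges of a graph on `V`,
no two of which share a vertex. -/
def IsGraphMatching {V : Type} (F : Finset (Sym2 V)) : Prop :=
  (∀ e ∈ F, ¬ e.IsDiag) ∧ ∀ e ∈ F, ∀ f ∈ F, e ≠ f → ∀ v : V, v ∈ e → v ∉ f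

/-- A finite edge set forming a (simple) path: the edges are exactly the
consecutive pairs of a duplicate-free list of vertices. -/
def IsPathEdgeSet {V : Type} [DecidableEq V] (P : Finset (Sym2 V)) : Prop :=
  ∃ l : List V, l.Nodup ∧ P = ((l.zip l.tail).map (fun p => s(p.1, p.2))).toFinset

namespace Stmt17Aux

variable {V : Type} [DecidableEq V]

def PM (M : Finset (Sym2 V)) : Prop :=
  (∀ e ∈ M, ¬ e.IsDiag) ∧ ∀ e ∈ M, ∀ f ∈ M, e ≠ f → ∀ v : V, v ∈ e → v ∉ f

lemma PM.uniq {M : Finset (Sym2 V)} (h : PM M) {e f : Sym2 V} (he : e ∈ M) (hf : f ∈ M)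
    {v : V} (hv : v ∈ e) (hv' : v ∈ f) : e = f := by
  by_contra hne
  exact h.2 e he f hf hne v hv hv'

def edgeList (l : List V) : List (Sym2 V) := (l.zip l.tail).map (fun p => s(p.1, p.2))

@[simp] lemma edgeList_cons_cons (u v : V) (r : List V) :
    edgeList (u :: v :: r) = s(u, v) :: edgeList (v :: r) := rfl

@[simp] lemma edgeList_single (u : V) : edgeList [u] = [] := rfl

@[simp] lemma edgeList_nil : edgeList ([] : List V) = [] := rfl

lemma mem_of_mem_edgeList {l : List V} {e : Sym2 V} (he : e ∈ edgeList l) {v : V}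
    (hv : v ∈ e) : v ∈ l := by
  induction l with
  | nil => simp [edgeList] at he
  | cons u t ih =>
    cases t with
    | nil => simp [edgeList] at he
    | cons x r =>
      rw [edgeList_cons_cons] at he
      rcases List.mem_cons.1 he with h | h
      · subst h
        rcases Sym2.mem_iff.1 hv with rfl | rfl
        · exact List.mem_cons_self
        · exact List.mem_cons_of_mem _ (List.mem_cons_self)
      · exact List.mem_cons_of_mem _ (ih h)

lemma head_edge {u : V} {t : List V} (hnd : (u :: t).Nodup)
    {f : Sym2 V} (hf : f ∈ edgeList (u :: t)) (hu : u ∈ f) :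
    ∃ v', t.head? = some v' ∧ f = s(u, v') := by
  cases t with
  | nil => simp [edgeList] at hf
  | cons v r =>
    rw [edgeList_cons_cons] at hf
    rcases List.mem_cons.1 hf with h | h
    · exact ⟨v, rfl, h⟩
    · exact absurd (mem_of_mem_edgeList h hu) (List.nodup_cons.1 hnd).1

inductive W (A B : Finset (Sym2 V)) (v₀ : V) : Bool → V → List V → Prop
  | init (v₁ : V) : s(v₀, v₁) ∈ B → W A B v₀ true v₁ [v₁, v₀]
  | cons {b : Bool} {u w : V} {l : List V} :
      W A B v₀ b u l → s(u, w) ∈ (if b then A else B) → W A B v₀ (!b) w (w :: l)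

structure Inv (A B : Finset (Sym2 V)) (b : Bool) (u : V) (l : List V) : Prop where
  struct : ∃ v₁ t, l = u :: v₁ :: t ∧ s(u, v₁) ∈ (if b then B else A)
  nodup : l.Nodup
  parity : b = true ↔ Even l.length
  sub : ∀ e ∈ edgeList l, e ∈ A ∪ B
  inc : ∀ v ∈ l, ∀ e ∈ A ∪ B, v ∈ e → e ∈ edgeList l ∨ (v = u ∧ e ∈ (if b then A else B))
  cardB : ((edgeList l).toFinset ∩ B).card = l.length / 2
  cardA : ((edgeList l).toFinset ∩ A).card = (l.length - 1) / 2

variable {A B : Finset (Sym2 V)} {v₀ : V}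

lemma W_inv (pmA : PM A) (pmB : PM B) (disj : A ∩ B = ∅)
    (hv₀ : ∀ e ∈ A, v₀ ∉ e) {b : Bool} {u : V} {l : List V}
    (hW : W A B v₀ b u l) : Inv A B b u l := by
  have hdisj : ∀ e : Sym2 V, e ∈ A → e ∈ B → False := fun e hA hB => by
    have : e ∈ A ∩ B := Finset.mem_inter.2 ⟨hA, hB⟩
    simp [disj] at this
  induction hW with
  | init v₁ hB =>
    have hne : v₀ ≠ v₁ := fun h => pmB.1 _ hB (h ▸ Sym2.mk_isDiag_iff.2 rfl)
    have hswap : s(v₁, v₀) = s(v₀, v₁) := Sym2.eq_swap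
    have hB' : s(v₁, v₀) ∈ B := hswap ▸ hB
    refine ⟨⟨v₀, [], rfl, by simpa using hB'⟩, by simp [hne.symm], by simp, ?_, ?_, ?_, ?_⟩
    · intro e he
      simp only [edgeList_cons_cons, edgeList_single, List.mem_singleton] at he
      exact Finset.mem_union_right _ (he ▸ hB')
    · intro v hv e he hve
      simp only [List.mem_cons, List.not_mem_nil, or_false] at hv
      rcases Finset.mem_union.1 he with heA | heB
      · rcases hv with h | h
        · exact Or.inr ⟨h, by simpa using heA⟩
        · exact absurd (h ▸ hve) (hv₀ e heA)
      · have hvm : v ∈ s(v₁, v₀) := by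
          rcases hv with h | h
          · rw [h]; exact Sym2.mem_mk_left _ _
          · rw [h]; exact Sym2.mem_mk_right _ _
        have he' : e = s(v₁, v₀) := pmB.uniq heB hB' hve hvm
        exact Or.inl (by simp [he'])
    · have h1 : (edgeList [v₁, v₀]).toFinset = {s(v₁, v₀)} := by simp
      rw [h1, Finset.singleton_inter_of_mem hB']
      simp
    · have h1 : (edgeList [v₁, v₀]).toFinset = {s(v₁, v₀)} := by simp
      have h2 : s(v₁, v₀) ∉ A := fun h => hdisj _ h hB'
      rw [h1, Finset.singleton_inter_of_notMem h2]
      simp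
  | @cons b u w l₀ hWl hw IH =>
    obtain ⟨v₁, t, rfl, htop⟩ := IH.struct
    have hfu : u ∈ s(u, w) := Sym2.mem_mk_left _ _
    have hfw : w ∈ s(u, w) := Sym2.mem_mk_right _ _
    have hfAB : s(u, w) ∈ A ∪ B := by
      cases b <;> simp only [if_true, if_false, Bool.false_eq_true] at hw <;>
        [exact Finset.mem_union_right _ hw; exact Finset.mem_union_left _ hw]
    have hndg : u ≠ w := by
      intro h
      have hd : (s(u, w)).IsDiag := h ▸ Sym2.mk_isDiag_iff.2 rfl
      rcases Finset.mem_union.1 hfAB with h' | h'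
      · exact pmA.1 _ h' hd
      · exact pmB.1 _ h' hd
    have hwl : w ∉ u :: v₁ :: t := by
      intro hwl
      rcases IH.inc w hwl _ hfAB hfw with hf | ⟨hwu, _⟩
      · obtain ⟨v', hv', hfe⟩ := head_edge IH.nodup hf hfu
        simp only [List.head?_cons, Option.some.injEq] at hv'
        subst hv'
        cases b
        · simp only [Bool.false_eq_true, if_false] at hw htop
          exact hdisj _ (hfe ▸ htop) hw
        · simp only [if_true] at hw htop
          exact hdisj _ hw (hfe ▸ htop)
      · exact hndg hwu.symm
    have hEL : edgeList (w :: u :: v₁ :: t) = s(w, u) :: edgeList (u :: v₁ :: t) := rfl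
    have hswap : s(w, u) = s(u, w) := Sym2.eq_swap
    have hnotel : s(w, u) ∉ edgeList (u :: v₁ :: t) := fun h =>
      hwl (mem_of_mem_edgeList h (Sym2.mem_mk_left _ _))
    have hlen : (u :: v₁ :: t).length = t.length + 2 := by simp
    have hm := IH.parity
    rw [Nat.even_iff] at hm
    refine ⟨⟨u, v₁ :: t, rfl, ?_⟩, List.nodup_cons.2 ⟨hwl, IH.nodup⟩, ?_, ?_, ?_, ?_, ?_⟩
    · cases b <;> simpa [hswap] using hw
    · rw [List.length_cons, Nat.even_add_one, ← IH.parity]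
      cases b <;> simp
    · intro e he
      rw [hEL] at he
      rcases List.mem_cons.1 he with h | h
      · exact h ▸ hswap ▸ hfAB
      · exact IH.sub e h
    · intro v hv e heAB hve
      rcases List.mem_cons.1 hv with hvw | hvl
      · have hve' : w ∈ e := hvw ▸ hve
        by_cases heC : e ∈ (if b then A else B)
        · left
          have he' : e = s(u, w) := by
            cases b
            · simp only [Bool.false_eq_true, if_false] at heC hw
              exact pmB.uniq heC hw hve' hfw
            · simp only [if_true] at heC hw
              exact pmA.uniq heC hw hve' hfw
          rw [hEL, he', ← hswap]
          exact List.mem_cons_self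
        · right
          refine ⟨hvw, ?_⟩
          rcases Finset.mem_union.1 heAB with h' | h' <;> cases b <;> simp_all
      · rcases IH.inc v hvl e heAB hve with h | ⟨hvu, heC⟩
        · exact Or.inl (by rw [hEL]; exact List.mem_cons_of_mem _ h)
        · left
          have hve' : u ∈ e := hvu ▸ hve
          have he' : e = s(u, w) := by
            cases b
            · simp only [Bool.false_eq_true, if_false] at heC hw
              exact pmB.uniq heC hw hve' hfu
            · simp only [if_true] at heC hw
              exact pmA.uniq heC hw hve' hfu
          rw [hEL, he', ← hswap]
          exact List.mem_cons_self
    · -- cardB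
      rw [hEL]
      have hins : (s(w,u) :: edgeList (u :: v₁ :: t)).toFinset
          = insert s(w,u) (edgeList (u :: v₁ :: t)).toFinset := by simp
      rw [hins]
      cases b
      · simp only [Bool.false_eq_true, if_false] at hw hm
        have hwB : s(w,u) ∈ B := hswap ▸ hw
        rw [Finset.insert_inter_of_mem hwB,
          Finset.card_insert_of_notMem
            (fun h => hnotel (by simpa using (Finset.mem_inter.1 h).1)), IH.cardB]
        have hodd : ¬ (u :: v₁ :: t).length % 2 = 0 := fun h => by simp [hm.2 h] at hm ⊢
        simp only [List.length_cons] at *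
        omega
      · simp only [if_true] at hw hm
        have hwnB : s(w,u) ∉ B := fun h => hdisj _ (hswap ▸ hw) h
        rw [Finset.insert_inter_of_notMem hwnB, IH.cardB]
        have heven : (u :: v₁ :: t).length % 2 = 0 := hm.1 trivial
        simp only [List.length_cons] at *
        omega
    · -- cardA
      rw [hEL]
      have hins : (s(w,u) :: edgeList (u :: v₁ :: t)).toFinset
          = insert s(w,u) (edgeList (u :: v₁ :: t)).toFinset := by simp
      rw [hins]
      cases b
      · simp only [Bool.false_eq_true, if_false] at hw hm
        have hwnA : s(w,u) ∉ A := fun h => hdisj _ h (hswap ▸ hw)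
        rw [Finset.insert_inter_of_notMem hwnA, IH.cardA]
        have hodd : ¬ (u :: v₁ :: t).length % 2 = 0 := fun h => by simp [hm.2 h] at hm ⊢
        simp only [List.length_cons] at *
        omega
      · simp only [if_true] at hw hm
        have hwA : s(w,u) ∈ A := hswap ▸ hw
        rw [Finset.insert_inter_of_mem hwA,
          Finset.card_insert_of_notMem
            (fun h => hnotel (by simpa using (Finset.mem_inter.1 h).1)), IH.cardA]
        have heven : (u :: v₁ :: t).length % 2 = 0 := hm.1 trivial
        simp only [List.length_cons] at *
        omega

/-- support of an edge as a finset -/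
def supp (e : Sym2 V) : Finset V :=
  Sym2.lift ⟨fun x y => ({x, y} : Finset V), fun x y => by
    ext z; simp [or_comm]⟩ e

@[simp] lemma mem_supp {e : Sym2 V} {v : V} : v ∈ supp e ↔ v ∈ e := by
  induction e using Sym2.ind with
  | _ x y => simp [supp, Sym2.mem_iff]

lemma card_supp_le (e : Sym2 V) : (supp e).card ≤ 2 := by
  induction e using Sym2.ind with
  | _ x y =>
    simp only [supp, Sym2.lift_mk]
    exact (Finset.card_insert_le _ _).trans (by simp)

lemma exists_edge_of_mem : ∀ {l : List V}, 2 ≤ l.length → ∀ {v : V}, v ∈ l →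
    ∃ e ∈ edgeList l, v ∈ e := by
  intro l
  induction l with
  | nil => simp
  | cons u t ih =>
    intro h2 v hv
    cases t with
    | nil => simp at h2
    | cons x r =>
      rcases List.mem_cons.1 hv with rfl | hv'
      · exact ⟨s(v, x), List.mem_cons_self, Sym2.mem_mk_left _ _⟩
      · cases r with
        | nil =>
          simp only [List.mem_cons, List.not_mem_nil, or_false] at hv'
          exact ⟨s(u, x), List.mem_cons_self, hv' ▸ Sym2.mem_mk_right _ _⟩
        | cons y r' =>
          obtain ⟨e, he, hve⟩ := ih (by simp) hv'
          exact ⟨e, List.mem_cons_of_mem _ he, hve⟩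

lemma length_le (pmA : PM A) (pmB : PM B) (disj : A ∩ B = ∅)
    (hv₀ : ∀ e ∈ A, v₀ ∉ e) {b : Bool} {u : V} {l : List V}
    (hW : W A B v₀ b u l) : l.length ≤ ((A ∪ B).biUnion supp).card := by
  have hInv := W_inv pmA pmB disj hv₀ hW
  obtain ⟨v₁, t, hl, _⟩ := hInv.struct
  have h2 : 2 ≤ l.length := by rw [hl]; simp
  have hsub : l.toFinset ⊆ (A ∪ B).biUnion supp := by
    intro v hv
    obtain ⟨e, he, hve⟩ := exists_edge_of_mem h2 (List.mem_toFinset.1 hv)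
    exact Finset.mem_biUnion.2 ⟨e, hInv.sub e he, mem_supp.2 hve⟩
  calc l.length = l.toFinset.card := (List.toFinset_card_of_nodup hInv.nodup).symm
    _ ≤ _ := Finset.card_le_card hsub

lemma exists_terminal (pmA : PM A) (pmB : PM B) (disj : A ∩ B = ∅)
    (hv₀ : ∀ e ∈ A, v₀ ∉ e) :
    ∀ (n : ℕ) {b : Bool} {u : V} {l : List V}, W A B v₀ b u l →
      ((A ∪ B).biUnion supp).card + 1 ≤ l.length + n →
    ∃ b' u' l', W A B v₀ b' u' l' ∧ ∀ w : V, s(u', w) ∉ (if b' then A else B) := by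
  intro n
  induction n with
  | zero =>
    intro b u l hW hlen
    have := length_le pmA pmB disj hv₀ hW
    omega
  | succ n ih =>
    intro b u l hW hlen
    by_cases hterm : ∀ w : V, s(u, w) ∉ (if b then A else B)
    · exact ⟨b, u, l, hW, hterm⟩
    · push_neg at hterm
      obtain ⟨w, hw⟩ := hterm
      have hW' := W.cons hW hw
      exact ih hW' (by simp only [List.length_cons]; omega)

/-- Existence of a maximal alternating path starting at an `A`-unsaturated,
`B`-saturated vertex. -/
lemma grow (pmA : PM A) (pmB : PM B) (disj : A ∩ B = ∅) {v₁ : V}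
    (hv₀A : ∀ e ∈ A, v₀ ∉ e) (hv₀B : s(v₀, v₁) ∈ B) :
    ∃ P : Finset (Sym2 V), P ⊆ A ∪ B ∧
      (∃ l : List V, l.Nodup ∧ P = ((l.zip l.tail).map (fun p => s(p.1, p.2))).toFinset) ∧
      (∀ e ∈ A ∪ B, e ∉ P → ∀ f ∈ P, ∀ v : V, v ∈ e → v ∉ f) ∧
      ((P ∩ B).card = (P ∩ A).card + 1 ∨
        ((P ∩ B).card = (P ∩ A).card ∧ 1 ≤ (P ∩ A).card)) := by
  have hW0 : W A B v₀ true v₁ [v₁, v₀] := W.init v₁ hv₀B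
  obtain ⟨b, u, l, hW, hterm⟩ :=
    exists_terminal pmA pmB disj hv₀A (((A ∪ B).biUnion supp).card + 1) hW0 (by simp)
  have hInv := W_inv pmA pmB disj hv₀A hW
  refine ⟨(edgeList l).toFinset, ?_, ⟨l, hInv.nodup, rfl⟩, ?_, ?_⟩
  · intro e he
    exact hInv.sub e (List.mem_toFinset.1 he)
  · intro e heAB heP f hf v hve hvf
    have hvl : v ∈ l := mem_of_mem_edgeList (List.mem_toFinset.1 hf) hvf
    rcases hInv.inc v hvl e heAB hve with h | ⟨hvu, heC⟩
    · exact heP (List.mem_toFinset.2 h)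
    · have hue : u ∈ e := hvu ▸ hve
      obtain ⟨w, rfl⟩ := (Sym2.mem_iff_exists).1 hue
      exact hterm w heC
  · obtain ⟨w₁, t, hl, _⟩ := hInv.struct
    have h2 : 2 ≤ l.length := by rw [hl]; simp
    have hp := hInv.parity
    rw [Nat.even_iff] at hp
    have hcB := hInv.cardB
    have hcA := hInv.cardA
    rcases Nat.even_or_odd l.length with he | ho
    · rw [Nat.even_iff] at he
      left; omega
    · rw [Nat.odd_iff] at ho
      right
      constructor <;> omega

lemma PM.mono {M M' : Finset (Sym2 V)} (h : PM M) (hs : M' ⊆ M) : PM M' :=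
  ⟨fun e he => h.1 e (hs he), fun e he f hf hne v hv => h.2 e (hs he) f (hs hf) hne v hv⟩

lemma card_supp {e : Sym2 V} (h : ¬ e.IsDiag) : (supp e).card = 2 := by
  induction e using Sym2.ind with
  | _ x y =>
    have hxy : x ≠ y := fun hh => h (Sym2.mk_isDiag_iff.2 hh)
    simp only [supp, Sym2.lift_mk]
    rw [Finset.card_insert_of_notMem (by simp [hxy])]
    simp

lemma card_biUnion_supp {M : Finset (Sym2 V)} (pm : PM M) :
    (M.biUnion supp).card = 2 * M.card := by
  rw [Finset.card_biUnion]
  · rw [Finset.sum_congr rfl (fun e he => card_supp (pm.1 e he))]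
    simp [Nat.mul_comm]
  · intro e he f hf hne
    rw [Function.onFun, Finset.disjoint_left]
    intro v hv hv'
    exact pm.2 e he f hf hne v (mem_supp.1 hv) (mem_supp.1 hv')

/-- Main structural lemma: an augmenting path exists. -/
lemma augment : ∀ (n : ℕ) (A B : Finset (Sym2 V)), A.card + B.card ≤ n →
    PM A → PM B → A ∩ B = ∅ → A.card + 2 ≤ B.card →
    ∃ P : Finset (Sym2 V), P ⊆ A ∪ B ∧
      (∃ l : List V, l.Nodup ∧ P = ((l.zip l.tail).map (fun p => s(p.1, p.2))).toFinset) ∧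
      (∀ e ∈ A ∪ B, e ∉ P → ∀ f ∈ P, ∀ v : V, v ∈ e → v ∉ f) ∧
      (P ∩ B).card = (P ∩ A).card + 1 := by
  intro n
  induction n with
  | zero =>
    intro A B hn _ _ _ hc
    omega
  | succ n ih =>
    intro A B hn pmA pmB disj hc
    -- find a vertex covered by B but not by A
    have hVB : (B.biUnion supp).card = 2 * B.card := card_biUnion_supp pmB
    have hVA : (A.biUnion supp).card ≤ 2 * A.card := by
      simpa [Nat.mul_comm] using
        Finset.card_biUnion_le_card_mul A supp 2 (fun e _ => card_supp_le e)
    have hns : ¬ B.biUnion supp ⊆ A.biUnion supp := by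
      intro hsub
      have := Finset.card_le_card hsub
      omega
    obtain ⟨v₀, hv₀B, hv₀A⟩ := Finset.not_subset.1 hns
    obtain ⟨e₀, he₀B, hv₀e₀⟩ := Finset.mem_biUnion.1 hv₀B
    obtain ⟨v₁, rfl⟩ := (Sym2.mem_iff_exists).1 (mem_supp.1 hv₀e₀)
    have hv₀A' : ∀ e ∈ A, v₀ ∉ e := fun e he hv =>
      hv₀A (Finset.mem_biUnion.2 ⟨e, he, mem_supp.2 hv⟩)
    obtain ⟨P₀, hP₀sub, hP₀path, hP₀sep, hP₀count⟩ := grow pmA pmB disj hv₀A' he₀B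
    rcases hP₀count with hcnt | ⟨hcnt, hpos⟩
    · exact ⟨P₀, hP₀sub, hP₀path, hP₀sep, hcnt⟩
    · -- remove this path component and recurse
      set A' := A \ P₀ with hA'
      set B' := B \ P₀ with hB'
      have hsubA : A' ⊆ A := Finset.sdiff_subset
      have hsubB : B' ⊆ B := Finset.sdiff_subset
      have pmA' : PM A' := pmA.mono hsubA
      have pmB' : PM B' := pmB.mono hsubB
      have disj' : A' ∩ B' = ∅ := by
        rw [Finset.eq_empty_iff_forall_notMem]
        intro e he
        have h1 : e ∈ A ∩ B := Finset.mem_inter.2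
          ⟨hsubA (Finset.mem_inter.1 he).1, hsubB (Finset.mem_inter.1 he).2⟩
        simp [disj] at h1
      have hcA : A'.card + (A ∩ P₀).card = A.card := Finset.card_sdiff_add_card_inter A P₀
      have hcB : B'.card + (B ∩ P₀).card = B.card := Finset.card_sdiff_add_card_inter B P₀
      have hAc : (A ∩ P₀).card = (P₀ ∩ A).card := by rw [Finset.inter_comm]
      have hBc : (B ∩ P₀).card = (P₀ ∩ B).card := by rw [Finset.inter_comm]
      have hc' : A'.card + 2 ≤ B'.card := by omega
      have hn' : A'.card + B'.card ≤ n := by omega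
      obtain ⟨P, hPsub, hPpath, hPsep, hPcount⟩ := ih A' B' hn' pmA' pmB' disj' hc'
      have hsubAB : A' ∪ B' ⊆ A ∪ B :=
        Finset.union_subset_union hsubA hsubB
      have hPnotP₀ : ∀ f ∈ P, f ∉ P₀ := by
        intro f hf
        rcases Finset.mem_union.1 (hPsub hf) with h | h
        · exact (Finset.mem_sdiff.1 h).2
        · exact (Finset.mem_sdiff.1 h).2
      have hPB : P ∩ B = P ∩ B' := by
        ext f
        simp only [Finset.mem_inter, hB', Finset.mem_sdiff]
        constructor
        · rintro ⟨hfP, hfB⟩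
          exact ⟨hfP, hfB, hPnotP₀ f hfP⟩
        · rintro ⟨hfP, hfB, _⟩
          exact ⟨hfP, hfB⟩
      have hPA : P ∩ A = P ∩ A' := by
        ext f
        simp only [Finset.mem_inter, hA', Finset.mem_sdiff]
        constructor
        · rintro ⟨hfP, hfA⟩
          exact ⟨hfP, hfA, hPnotP₀ f hfP⟩
        · rintro ⟨hfP, hfA, _⟩
          exact ⟨hfP, hfA⟩
      refine ⟨P, fun e he => hsubAB (hPsub he), hPpath, ?_, by rw [hPB, hPA]; exact hPcount⟩
      intro e heAB heP f hfP v hve hvf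
      by_cases heP₀ : e ∈ P₀
      · exact hP₀sep f (hsubAB (hPsub hfP)) (hPnotP₀ f hfP) e heP₀ v hvf hve
      · have heAB' : e ∈ A' ∪ B' := by
          rcases Finset.mem_union.1 heAB with h | h
          · exact Finset.mem_union_left _ (Finset.mem_sdiff.2 ⟨h, heP₀⟩)
          · exact Finset.mem_union_right _ (Finset.mem_sdiff.2 ⟨h, heP₀⟩)
        exact hPsep e heAB' heP f hfP v hve hvf

end Stmt17Aux

open Stmt17Aux in
theorem stmt17 {V : Type} [DecidableEq V] (F₀ F₁ : Finset (Sym2 V))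
    (h₀ : IsGraphMatching F₀) (h₁ : IsGraphMatching F₁)
    (hcard : F₀.card + 2 ≤ F₁.card) :
    ∃ P : Finset (Sym2 V),
      P ⊆ (F₀ \ F₁) ∪ (F₁ \ F₀) ∧
      IsPathEdgeSet P ∧
      (∀ e ∈ (F₀ \ F₁) ∪ (F₁ \ F₀), e ∉ P → ∀ f ∈ P, ∀ v : V, v ∈ e → v ∉ f) ∧
      (P ∩ F₀).card < (P ∩ F₁).card ∧
      IsGraphMatching ((F₀ \ P) ∪ (F₁ ∩ P)) ∧
      IsGraphMatching ((F₁ \ P) ∪ (F₀ ∩ P)) ∧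
      ((F₀ \ P) ∪ (F₁ ∩ P)).card = F₀.card + 1 ∧
      ((F₁ \ P) ∪ (F₀ ∩ P)).card = F₁.card - 1 := by
  set A := F₀ \ F₁ with hA
  set B := F₁ \ F₀ with hB
  have pm₀ : PM F₀ := h₀
  have pm₁ : PM F₁ := h₁
  have pmA : PM A := pm₀.mono Finset.sdiff_subset
  have pmB : PM B := pm₁.mono Finset.sdiff_subset
  have disj : A ∩ B = ∅ := by
    rw [Finset.eq_empty_iff_forall_notMem]
    intro e he
    rw [Finset.mem_inter, hA, hB, Finset.mem_sdiff, Finset.mem_sdiff] at he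
    tauto
  have hcA : A.card + (F₀ ∩ F₁).card = F₀.card := Finset.card_sdiff_add_card_inter F₀ F₁
  have hcB : B.card + (F₁ ∩ F₀).card = F₁.card := Finset.card_sdiff_add_card_inter F₁ F₀
  have hcc : (F₀ ∩ F₁).card = (F₁ ∩ F₀).card := by rw [Finset.inter_comm]
  have hc : A.card + 2 ≤ B.card := by omega
  obtain ⟨P, hPsub, hPpath, hPsep, hPcount⟩ :=
    augment (A.card + B.card) A B le_rfl pmA pmB disj hc
  have hPF₀ : P ∩ F₀ = P ∩ A := by
    ext e
    simp only [Finset.mem_inter]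
    constructor
    · rintro ⟨heP, heF₀⟩
      refine ⟨heP, ?_⟩
      rcases Finset.mem_union.1 (hPsub heP) with h | h
      · exact h
      · exact absurd heF₀ (Finset.mem_sdiff.1 h).2
    · rintro ⟨heP, heA⟩
      exact ⟨heP, (Finset.mem_sdiff.1 heA).1⟩
  have hPF₁ : P ∩ F₁ = P ∩ B := by
    ext e
    simp only [Finset.mem_inter]
    constructor
    · rintro ⟨heP, heF₁⟩
      refine ⟨heP, ?_⟩
      rcases Finset.mem_union.1 (hPsub heP) with h | h
      · exact absurd heF₁ (Finset.mem_sdiff.1 h).2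
      · exact h
    · rintro ⟨heP, heB⟩
      exact ⟨heP, (Finset.mem_sdiff.1 heB).1⟩
  have hcount' : (P ∩ F₁).card = (P ∩ F₀).card + 1 := by
    rw [hPF₀, hPF₁]; exact hPcount
  refine ⟨P, hPsub, hPpath, hPsep, by omega, ?_, ?_, ?_, ?_⟩
  · -- F₀' is a matching
    constructor
    · intro e he
      rcases Finset.mem_union.1 he with h | h
      · exact pm₀.1 e (Finset.mem_sdiff.1 h).1
      · exact pm₁.1 e (Finset.mem_inter.1 h).1
    · intro e he f hf hne v hve hvf
      rcases Finset.mem_union.1 he with he' | he' <;>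
        rcases Finset.mem_union.1 hf with hf' | hf'
      · exact pm₀.2 e (Finset.mem_sdiff.1 he').1 f (Finset.mem_sdiff.1 hf').1 hne v hve hvf
      · by_cases heF₁ : e ∈ F₁
        · exact pm₁.2 e heF₁ f (Finset.mem_inter.1 hf').1 hne v hve hvf
        · have heA : e ∈ A := Finset.mem_sdiff.2 ⟨(Finset.mem_sdiff.1 he').1, heF₁⟩
          exact hPsep e (Finset.mem_union_left _ heA) (Finset.mem_sdiff.1 he').2
            f (Finset.mem_inter.1 hf').2 v hve hvf
      · by_cases hfF₁ : f ∈ F₁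
        · exact pm₁.2 e (Finset.mem_inter.1 he').1 f hfF₁ hne v hve hvf
        · have hfA : f ∈ A := Finset.mem_sdiff.2 ⟨(Finset.mem_sdiff.1 hf').1, hfF₁⟩
          exact hPsep f (Finset.mem_union_left _ hfA) (Finset.mem_sdiff.1 hf').2
            e (Finset.mem_inter.1 he').2 v hvf hve
      · exact pm₁.2 e (Finset.mem_inter.1 he').1 f (Finset.mem_inter.1 hf').1 hne v hve hvf
  · -- F₁' is a matching
    constructor
    · intro e he
      rcases Finset.mem_union.1 he with h | h
      · exact pm₁.1 e (Finset.mem_sdiff.1 h).1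
      · exact pm₀.1 e (Finset.mem_inter.1 h).1
    · intro e he f hf hne v hve hvf
      rcases Finset.mem_union.1 he with he' | he' <;>
        rcases Finset.mem_union.1 hf with hf' | hf'
      · exact pm₁.2 e (Finset.mem_sdiff.1 he').1 f (Finset.mem_sdiff.1 hf').1 hne v hve hvf
      · by_cases heF₀ : e ∈ F₀
        · exact pm₀.2 e heF₀ f (Finset.mem_inter.1 hf').1 hne v hve hvf
        · have heB : e ∈ B := Finset.mem_sdiff.2 ⟨(Finset.mem_sdiff.1 he').1, heF₀⟩
          exact hPsep e (Finset.mem_union_right _ heB) (Finset.mem_sdiff.1 he').2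
            f (Finset.mem_inter.1 hf').2 v hve hvf
      · by_cases hfF₀ : f ∈ F₀
        · exact pm₀.2 e (Finset.mem_inter.1 he').1 f hfF₀ hne v hve hvf
        · have hfB : f ∈ B := Finset.mem_sdiff.2 ⟨(Finset.mem_sdiff.1 hf').1, hfF₀⟩
          exact hPsep f (Finset.mem_union_right _ hfB) (Finset.mem_sdiff.1 hf').2
            e (Finset.mem_inter.1 he').2 v hvf hve
      · exact pm₀.2 e (Finset.mem_inter.1 he').1 f (Finset.mem_inter.1 hf').1 hne v hve hvf
  · -- card of F₀'
    have hd : Disjoint (F₀ \ P) (F₁ ∩ P) := by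
      rw [Finset.disjoint_left]
      intro e he hemem
      have heB : e ∈ B := by
        have : e ∈ P ∩ B := by
          rw [← hPF₁]
          exact Finset.mem_inter.2 ⟨(Finset.mem_inter.1 hemem).2, (Finset.mem_inter.1 hemem).1⟩
        exact (Finset.mem_inter.1 this).2
      exact (Finset.mem_sdiff.1 heB).2 (Finset.mem_sdiff.1 he).1
    rw [Finset.card_union_of_disjoint hd]
    have h1 : (F₀ \ P).card + (F₀ ∩ P).card = F₀.card := Finset.card_sdiff_add_card_inter F₀ P
    have h2 : (F₁ ∩ P).card = (P ∩ F₁).card := by rw [Finset.inter_comm]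
    have h3 : (F₀ ∩ P).card = (P ∩ F₀).card := by rw [Finset.inter_comm]
    omega
  · -- card of F₁'
    have hd : Disjoint (F₁ \ P) (F₀ ∩ P) := by
      rw [Finset.disjoint_left]
      intro e he hemem
      have heA : e ∈ A := by
        have : e ∈ P ∩ A := by
          rw [← hPF₀]
          exact Finset.mem_inter.2 ⟨(Finset.mem_inter.1 hemem).2, (Finset.mem_inter.1 hemem).1⟩
        exact (Finset.mem_inter.1 this).2
      exact (Finset.mem_sdiff.1 heA).2 (Finset.mem_sdiff.1 he).1
    rw [Finset.card_union_of_disjoint hd]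
    have h1 : (F₁ \ P).card + (F₁ ∩ P).card = F₁.card := Finset.card_sdiff_add_card_inter F₁ P
    have h2 : (F₁ ∩ P).card = (P ∩ F₁).card := by rw [Finset.inter_comm]
    have h3 : (F₀ ∩ P).card = (P ∩ F₀).card := by rw [Finset.inter_comm]
    omega
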